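/- Let p be a prime with p ≡ 1 (mod 4), let α be a primitive element of F_p^*, and let θ be the quartic character of F_p with θ(α) = i. Let f, g, h be character combination sequences with prime p whose character combinations are, respectively: f_θ = (1−i)/2, f_{θ̄} = (1+i)/2, and f_χ = 0 otherwise; g_θ = (1+i)/2, g_{θ̄} = (1−i)/2, and g_χ = 0 otherwise; h_η = 1 and h_χ = 0 otherwise, where η = θ² is the quadratic character. Then: S_{f,f} = S_{g,g} = (−3 − Re(τ(θ)⁴/p²))/2; S_{h,h} = −2; S_{f,g} = (−1 + Re(τ(θ)⁴/p²))/2; S_{f,h} = S_{g,h} = 0; U_{f,f} = U_{g,g} = U_{h,h} = V_{f,f} = V_{g,g} = V_{h,h} = 1; U_{f,g} = V_{f,g} = U_{f,h} = U_{g,h} = V_{f,h} = V_{g,h} = 0; W_f = W_g = √2; and W_h = 1. -/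

import Mathlib

open scoped BigOperators Classical ComplexOrder

noncomputable section

namespace Paper

/-- `Ω(x,y) = Σ_{n ∈ ℤ} max(0, 1 − |n·x − y|)²`. -/
def Omega (x y : ℝ) : ℝ := ∑' n : ℤ, max 0 (1 - |(n : ℝ) * x - y|) ^ 2

/-- The extension of a finite sequence of length `ℓ` by zero to all of `ℤ`. -/
def ext (ℓ : ℕ) (f : ℕ → ℂ) (j : ℤ) : ℂ :=
  if 0 ≤ j ∧ j < (ℓ : ℤ) then f j.toNat else 0

/-- Aperiodic crosscorrelation `C_{f,g}(s)` of two sequences of length `ℓ` at shift `s`. -/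
def XC (ℓ : ℕ) (f g : ℕ → ℂ) (s : ℤ) : ℂ :=
  ∑' j : ℤ, ext ℓ f j * (starRingEnd ℂ) (ext ℓ g (j + s))

/-- Crosscorrelation demerit factor `CDF(f,g)`. -/
def CDF (ℓ : ℕ) (f g : ℕ → ℂ) : ℝ :=
  (∑' s : ℤ, ‖(XC ℓ f g s)‖ ^ 2) /
    (‖(XC ℓ f f 0)‖ * ‖(XC ℓ g g 0)‖)

/-- Autocorrelation demerit factor `DF(f) = CDF(f,f) − 1`. -/
def DF (ℓ : ℕ) (f : ℕ → ℂ) : ℝ := CDF ℓ f f - 1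

/-- `u` is a unimodularization of the length-`ℓ` sequence `f`: it agrees with `f` at
nonzero terms and replaces each zero term by a complex number of modulus `1`. -/
def IsUnimodularization (ℓ : ℕ) (f u : ℕ → ℂ) : Prop :=
  ∀ j < ℓ, (f j ≠ 0 → u j = f j) ∧ (f j = 0 → ‖(u j)‖ = 1)

/-- The multiplicative characters of `F_p = ZMod p`, extended by `χ(0) = 0`. -/
abbrev MChar (p : ℕ) := MulChar (ZMod p) ℂ

instance (p : ℕ) [Fact p.Prime] : Fintype (MChar p) := Fintype.ofFinite _

/-- The Gauss sum `τ(χ) = Σ_{x ∈ F_p} e^{2πi x / p} χ(x)` (note `χ(0) = 0`). -/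
def gauss (p : ℕ) [Fact p.Prime] (χ : MChar p) : ℂ :=
  ∑ x : ZMod p, Complex.exp (2 * Real.pi * Complex.I * (x.val : ℂ) / (p : ℂ)) * χ x

/-- The quadratic character `η` of `F_p`, with values in `ℂ`. -/
def quadChar (p : ℕ) [Fact p.Prime] : MChar p :=
  (quadraticChar (ZMod p)).ringHomComp (Int.castRingHom ℂ)

/-- `c` is a character combination: the coefficient of the trivial character vanishes and
the sum of the squared magnitudes of the coefficients is `1`. -/
def IsCharCombo (p : ℕ) [Fact p.Prime] (c : MChar p → ℂ) : Prop :=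
  c 1 = 0 ∧ ∑ χ : MChar p, ‖(c χ)‖ ^ 2 = 1

/-- The function `F(a) = Σ_χ f_χ · χ(a)` attached to a character combination. -/
def combFun (p : ℕ) [Fact p.Prime] (c : MChar p → ℂ) (a : ZMod p) : ℂ :=
  ∑ χ : MChar p, c χ * χ a

/-- The character combination sequence with shift `s`: its `j`-th term is `F(s + j)`. -/
def combSeq (p : ℕ) [Fact p.Prime] (c : MChar p → ℂ) (s : ℤ) : ℕ → ℂ :=
  fun j => combFun p c (((s + (j : ℤ)) : ℤ) : ZMod p)

/-- A character combination is unimodularizable when `|F(a)| = 1` for all `a ≠ 0`. -/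
def Unimodularizable (p : ℕ) [Fact p.Prime] (c : MChar p → ℂ) : Prop :=
  ∀ a : ZMod p, a ≠ 0 → ‖(combFun p c a)‖ = 1

/-- The parameter `S_{f,g}` of a pair of character combination sequences. -/
def Sparam (p : ℕ) [Fact p.Prime] (c d : MChar p → ℂ) : ℂ :=
  (∑ φ : MChar p, ∑ χ : MChar p, ∑ ψ : MChar p, ∑ ω : MChar p,
      if φ * χ = ψ * ω ∧ φ ≠ χ⁻¹ ∧ φ ≠ ψ ∧ φ ≠ ω then
        c φ * d χ * (starRingEnd ℂ) (c ψ * d ω) *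
          (gauss p φ * gauss p χ * (starRingEnd ℂ) (gauss p ψ * gauss p ω)) / (p : ℂ) ^ 2
      else 0)
    - ((∑ φ : MChar p, ‖(c φ * d φ)‖ ^ 2 : ℝ) : ℂ)
    - ((∑ φ : MChar p, ‖(c φ * d φ⁻¹)‖ ^ 2 : ℝ) : ℂ)
    - ∑ φ : MChar p, c φ * (starRingEnd ℂ) (c φ⁻¹) * d φ⁻¹ * (starRingEnd ℂ) (d φ)
    + ((‖(c (quadChar p) * d (quadChar p))‖ ^ 2 : ℝ) : ℂ)

/-- The parameter `S_{f,f}` of a single character combination sequence. -/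
def SparamAuto (p : ℕ) [Fact p.Prime] (c : MChar p → ℂ) : ℂ :=
  (∑ φ : MChar p, ∑ χ : MChar p, ∑ ψ : MChar p, ∑ ω : MChar p,
      if φ * χ = ψ * ω ∧ φ ≠ χ⁻¹ ∧ φ ≠ ψ ∧ φ ≠ ω then
        c φ * c χ * (starRingEnd ℂ) (c ψ * c ω) *
          (gauss p φ * gauss p χ * (starRingEnd ℂ) (gauss p ψ * gauss p ω)) / (p : ℂ) ^ 2
      else 0)
    - 2 * ((∑ φ : MChar p, ‖(c φ * c φ⁻¹)‖ ^ 2 : ℝ) : ℂ)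
    - ((∑ φ : MChar p, ‖(c φ)‖ ^ 4 : ℝ) : ℂ)
    + ((‖(c (quadChar p))‖ ^ 4 : ℝ) : ℂ)

/-- The parameter `U_{f,g}`. -/
def Uparam (p : ℕ) [Fact p.Prime] (c d : MChar p → ℂ) : ℝ :=
  ‖(∑ φ : MChar p, c φ * (starRingEnd ℂ) (d φ))‖ ^ 2

/-- The parameter `V_{f,g}`. -/
def Vparam (p : ℕ) [Fact p.Prime] (c d : MChar p → ℂ) : ℝ :=
  ‖(∑ φ : MChar p, c φ * d φ⁻¹ * φ (-1))‖ ^ 2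

/-- The parameter `W_f`. -/
def Wparam (p : ℕ) [Fact p.Prime] (c : MChar p → ℂ) : ℝ :=
  ∑ φ : MChar p, ‖(c φ)‖

/-- Periodic crosscorrelation of two periodic sequences of period `n` at shift `s`. -/
def PC (n : ℕ) [NeZero n] (u v : ZMod n → ℂ) (s : ZMod n) : ℂ :=
  ∑ j : ZMod n, u j * (starRingEnd ℂ) (v (j + s))

/-- Fourier transform `û_a = Σ_x u_x e^{2πi a x / n}` of a periodic sequence of period `n`. -/
def FT (n : ℕ) [NeZero n] (u : ZMod n → ℂ) (a : ZMod n) : ℂ :=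
  ∑ x : ZMod n, u x * Complex.exp (2 * Real.pi * Complex.I * ((a.val : ℂ) * (x.val : ℂ)) / (n : ℂ))

/-- `α` is a primitive element of `F_p`, i.e. a generator of the unit group. -/
def IsPrimitive (p : ℕ) (α : (ZMod p)ˣ) : Prop :=
  ∀ x : (ZMod p)ˣ, x ∈ Subgroup.zpowers α

/-- The subgroup `F_p^{*2m}` of `2m`-th powers in the unit group of `F_p`. -/
def powSubgroup (p m : ℕ) : Subgroup (ZMod p)ˣ :=
  (powMonoidHom (2 * m) : (ZMod p)ˣ →* (ZMod p)ˣ).range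

/-- The quotient group `F_p^* / F_p^{*2m}` of `2m`-th power residue classes. -/
abbrev ResCosets (p m : ℕ) := (ZMod p)ˣ ⧸ powSubgroup p m

/-- The function `F_{p,𝒜}`: `0` at `0`, `+1` on the union of the cosets in `𝒜`,
`−1` on the remaining nonzero elements. -/
def resFun (p m : ℕ) (A : Finset (ResCosets p m)) (j : ZMod p) : ℂ :=
  if h : IsUnit j then (if (QuotientGroup.mk h.unit : ResCosets p m) ∈ A then 1 else -1) else 0

/-- The sequence of a `2m`-th residue class construction, with shift `s`. -/
def resSeq (p m : ℕ) (A : Finset (ResCosets p m)) (s : ℤ) : ℕ → ℂ :=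
  fun j => resFun p m A (((s + (j : ℤ)) : ℤ) : ZMod p)

/-- The character combination coefficients of a `2m`-th residue class sequence:
`f_χ = (1/m) Σ_{A ∈ 𝒜} χ̄(A)` for nontrivial `χ` in the subgroup `Θ_p` of order `2m`
(characterized by `χ^{2m} = 1`), and `f_χ = 0` otherwise; `χ̄(A)` is evaluated at a
representative of the coset `A`, on which `χ̄` is constant. -/
def resCoef (p m : ℕ) [Fact p.Prime] (A : Finset (ResCosets p m)) (χ : MChar p) : ℂ :=
  if χ ≠ 1 ∧ χ ^ (2 * m) = 1 then
    (1 / (m : ℂ)) * ∑ B ∈ A, χ⁻¹ ((B.out : (ZMod p)ˣ) : ZMod p)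
  else 0

/-- The image of the coset `B` under multiplication by `−1`. -/
def negCoset (p m : ℕ) (B : ResCosets p m) : ResCosets p m :=
  QuotientGroup.mk ((-1 : (ZMod p)ˣ) * B.out)

/-- The quadratic residue function `H̃_p`: `+1` on `F_p^{*2}`, `−1` on `α F_p^{*2}`,
and `0` at `0`. -/
def Htilde (p : ℕ) (α : (ZMod p)ˣ) (x : ZMod p) : ℂ :=
  if ∃ y : (ZMod p)ˣ, x = ((y ^ 2 : (ZMod p)ˣ) : ZMod p) then 1
  else if ∃ y : (ZMod p)ˣ, x = ((α * y ^ 2 : (ZMod p)ˣ) : ZMod p) then -1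
  else 0

/-- The quartic residue function `F̃_p`: `+1` on `F_p^{*4} ∪ αF_p^{*4}`,
`−1` on `α²F_p^{*4} ∪ α³F_p^{*4}`, and `0` at `0`. -/
def Ftilde (p : ℕ) (α : (ZMod p)ˣ) (x : ZMod p) : ℂ :=
  if (∃ y : (ZMod p)ˣ, x = ((y ^ 4 : (ZMod p)ˣ) : ZMod p)) ∨
      (∃ y : (ZMod p)ˣ, x = ((α * y ^ 4 : (ZMod p)ˣ) : ZMod p)) then 1
  else if (∃ y : (ZMod p)ˣ, x = ((α ^ 2 * y ^ 4 : (ZMod p)ˣ) : ZMod p)) ∨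
      (∃ y : (ZMod p)ˣ, x = ((α ^ 3 * y ^ 4 : (ZMod p)ˣ) : ZMod p)) then -1
  else 0

/-- The quartic residue function `G̃_p`: `+1` on `F_p^{*4} ∪ α³F_p^{*4}`,
`−1` on `αF_p^{*4} ∪ α²F_p^{*4}`, and `0` at `0`. -/
def Gtilde (p : ℕ) (α : (ZMod p)ˣ) (x : ZMod p) : ℂ :=
  if (∃ y : (ZMod p)ˣ, x = ((y ^ 4 : (ZMod p)ˣ) : ZMod p)) ∨
      (∃ y : (ZMod p)ˣ, x = ((α ^ 3 * y ^ 4 : (ZMod p)ˣ) : ZMod p)) then 1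
  else if (∃ y : (ZMod p)ˣ, x = ((α * y ^ 4 : (ZMod p)ˣ) : ZMod p)) ∨
      (∃ y : (ZMod p)ˣ, x = ((α ^ 2 * y ^ 4 : (ZMod p)ˣ) : ZMod p)) then -1
  else 0

/-- The quadratic residue sequence `h̃_p^{s,ℓ}` (as a function; the length is used
in the correlation functionals). -/
def hSeq (p : ℕ) (α : (ZMod p)ˣ) (s : ℤ) : ℕ → ℂ :=
  fun j => Htilde p α (((s + (j : ℤ)) : ℤ) : ZMod p)

/-- The quartic residue sequence `f̃_p^{s,ℓ}`. -/
def fSeq (p : ℕ) (α : (ZMod p)ˣ) (s : ℤ) : ℕ → ℂ :=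
  fun j => Ftilde p α (((s + (j : ℤ)) : ℤ) : ZMod p)

/-- The quartic residue sequence `g̃_p^{s,ℓ}`. -/
def gSeq (p : ℕ) (α : (ZMod p)ˣ) (s : ℤ) : ℕ → ℂ :=
  fun j => Gtilde p α (((s + (j : ℤ)) : ℤ) : ZMod p)

/-! ### Auxiliary lemmas for `quartic_parameter_values` -/

lemma sum_pair' {M ι : Type*} [AddCommMonoid M] [Fintype ι] [DecidableEq ι] {a b : ι}
    (hab : a ≠ b) (F : ι → M) (h : ∀ x, x ≠ a → x ≠ b → F x = 0) :
    ∑ x, F x = F a + F b := by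
  rw [← Finset.sum_pair hab]
  refine (Finset.sum_subset (Finset.subset_univ _) ?_).symm
  intro x _ hx
  simp only [Finset.mem_insert, Finset.mem_singleton, not_or] at hx
  exact h x hx.1 hx.2

lemma sum_single' {M ι : Type*} [AddCommMonoid M] [Fintype ι] [DecidableEq ι] (a : ι)
    (F : ι → M) (h : ∀ x, x ≠ a → F x = 0) : ∑ x, F x = F a :=
  Finset.sum_eq_single_of_mem a (Finset.mem_univ a) (fun x _ hx => h x hx)

section AuxChar

variable {p : ℕ} [Fact p.Prime]

lemma abs_mulChar_unit (χ : MChar p) (u : (ZMod p)ˣ) : ‖(χ u)‖ = 1 := by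
  have hu : u ^ (p - 1) = 1 := by
    have := pow_card_eq_one (G := (ZMod p)ˣ) (x := u)
    rwa [ZMod.card_units] at this
  have h1 : (χ (u : ZMod p)) ^ (p - 1) = 1 := by
    rw [← map_pow, ← Units.val_pow_eq_pow_val, hu, Units.val_one, map_one]
  have hp : p - 1 ≠ 0 := Nat.sub_ne_zero_of_lt (Fact.out : p.Prime).one_lt
  exact Complex.norm_eq_one_of_pow_eq_one h1 hp

lemma conj_mulChar (χ : MChar p) (x : ZMod p) :
    (starRingEnd ℂ) (χ x) = χ⁻¹ x := by
  rcases eq_or_ne x 0 with rfl | hx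
  · simp [MulChar.map_nonunit]
  · have hu : IsUnit x := isUnit_iff_ne_zero.mpr hx
    rw [MulChar.inv_apply_eq_inv' , ← Complex.inv_eq_conj]
    rw [← hu.unit_spec]
    exact abs_mulChar_unit χ hu.unit

lemma conj_gauss (χ : MChar p) :
    (starRingEnd ℂ) (gauss p χ) = χ⁻¹ (-1) * gauss p χ⁻¹ := by
  have hp : (1:ℕ) < p := (Fact.out : p.Prime).one_lt
  rw [gauss, map_sum, gauss, Finset.mul_sum]
  rw [← Equiv.sum_comp (Equiv.neg (ZMod p)) (fun x => (starRingEnd ℂ)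
    (Complex.exp (2 * Real.pi * Complex.I * (x.val : ℂ) / (p : ℂ)) * χ x))]
  refine Finset.sum_congr rfl (fun x _ => ?_)
  simp only [Equiv.neg_apply]
  rcases eq_or_ne x 0 with rfl | hx
  · simp [MulChar.map_nonunit]
  · rw [map_mul, conj_mulChar, ← Complex.exp_conj]
    have hval : ((-x).val : ℂ) = (p : ℂ) - (x.val : ℂ) := by
      rw [ZMod.neg_val, if_neg hx]
      have : x.val ≤ p := le_of_lt (ZMod.val_lt x)
      push_cast [Nat.cast_sub this]
      ring
    have hconj : (starRingEnd ℂ) (2 * Real.pi * Complex.I * ((-x).val : ℂ) / (p : ℂ))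
        = 2 * Real.pi * Complex.I * (x.val : ℂ) / (p : ℂ) - 2 * Real.pi * Complex.I := by
      have hp0 : (p : ℂ) ≠ 0 := Nat.cast_ne_zero.mpr (by omega)
      rw [map_div₀]
      simp only [map_mul, Complex.conj_I, Complex.conj_ofReal, map_ofNat, map_natCast]
      rw [hval]
      field_simp
      ring
    rw [hconj, Complex.exp_sub, Complex.exp_two_pi_mul_I, div_one]
    have : χ⁻¹ (-x) = χ⁻¹ (-1) * χ⁻¹ x := by
      rw [← map_mul]; ring_nf
    rw [this]; ring

lemma charZpow (χ : MChar p) (u : (ZMod p)ˣ) (k : ℤ) :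
    χ ((u ^ k : (ZMod p)ˣ) : ZMod p) = χ (u : ZMod p) ^ k := by
  rw [← MulChar.coe_toUnitHom, map_zpow, Units.val_zpow_eq_zpow_val, MulChar.coe_toUnitHom]

lemma char_eq_of_gen {α : (ZMod p)ˣ} (hα : ∀ x : (ZMod p)ˣ, x ∈ Subgroup.zpowers α)
    (χ χ' : MChar p) (h : χ (α : ZMod p) = χ' (α : ZMod p)) : χ = χ' := by
  apply MulChar.ext; intro a
  obtain ⟨k, hk⟩ := Subgroup.mem_zpowers_iff.mp (hα a)
  rw [← hk, charZpow, charZpow, h]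

lemma Sparam_pair (θ : MChar p) (hab : θ ≠ θ⁻¹) (hsq : θ * θ = θ⁻¹ * θ⁻¹)
    (hq1 : quadChar p ≠ θ) (hq2 : quadChar p ≠ θ⁻¹) (a1 a2 b1 b2 : ℂ) :
    Sparam p (fun χ => if χ = θ then a1 else if χ = θ⁻¹ then a2 else 0)
             (fun χ => if χ = θ then b1 else if χ = θ⁻¹ then b2 else 0) =
      a1 * b1 * (starRingEnd ℂ) (a2 * b2) *
          (gauss p θ * gauss p θ * (starRingEnd ℂ) (gauss p θ⁻¹ * gauss p θ⁻¹)) / (p : ℂ) ^ 2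
      + a2 * b2 * (starRingEnd ℂ) (a1 * b1) *
          (gauss p θ⁻¹ * gauss p θ⁻¹ * (starRingEnd ℂ) (gauss p θ * gauss p θ)) / (p : ℂ) ^ 2
      - ((‖(a1 * b1)‖ ^ 2 + ‖(a2 * b2)‖ ^ 2 : ℝ) : ℂ)
      - ((‖(a1 * b2)‖ ^ 2 + ‖(a2 * b1)‖ ^ 2 : ℝ) : ℂ)
      - (a1 * (starRingEnd ℂ) a2 * b2 * (starRingEnd ℂ) b1
         + a2 * (starRingEnd ℂ) a1 * b1 * (starRingEnd ℂ) b2) := by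
  have hba : θ⁻¹ ≠ θ := fun h => hab h.symm
  set c : MChar p → ℂ := fun χ => if χ = θ then a1 else if χ = θ⁻¹ then a2 else 0 with hc
  set d : MChar p → ℂ := fun χ => if χ = θ then b1 else if χ = θ⁻¹ then b2 else 0 with hd
  have hcθ : c θ = a1 := by simp [hc]
  have hcθ' : c θ⁻¹ = a2 := by simp [hc, hba]
  have hdθ : d θ = b1 := by simp [hd]
  have hdθ' : d θ⁻¹ = b2 := by simp [hd, hba]
  have hc0 : ∀ x, x ≠ θ → x ≠ θ⁻¹ → c x = 0 := by intro x h1 h2; simp [hc, h1, h2]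
  have hd0 : ∀ x, x ≠ θ → x ≠ θ⁻¹ → d x = 0 := by intro x h1 h2; simp [hd, h1, h2]
  rw [Sparam]
  have h1 : (∑ φ : MChar p, ∑ χ : MChar p, ∑ ψ : MChar p, ∑ ω : MChar p,
      if φ * χ = ψ * ω ∧ φ ≠ χ⁻¹ ∧ φ ≠ ψ ∧ φ ≠ ω then
        c φ * d χ * (starRingEnd ℂ) (c ψ * d ω) *
          (gauss p φ * gauss p χ * (starRingEnd ℂ) (gauss p ψ * gauss p ω)) / (p : ℂ) ^ 2
      else 0) =
      a1 * b1 * (starRingEnd ℂ) (a2 * b2) *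
          (gauss p θ * gauss p θ * (starRingEnd ℂ) (gauss p θ⁻¹ * gauss p θ⁻¹)) / (p : ℂ) ^ 2
      + a2 * b2 * (starRingEnd ℂ) (a1 * b1) *
          (gauss p θ⁻¹ * gauss p θ⁻¹ * (starRingEnd ℂ) (gauss p θ * gauss p θ)) / (p : ℂ) ^ 2 := by
    rw [sum_pair' hab]
    · congr 1
      · -- φ = θ branch
        rw [sum_single' θ]
        · rw [sum_single' θ⁻¹]
          · rw [sum_single' θ⁻¹]
            · rw [if_pos ⟨hsq, hab, hab, hab⟩, hcθ, hdθ, hcθ', hdθ']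
            · intro ω hω
              rcases eq_or_ne ω θ with rfl | hω2
              · exact if_neg (fun h => h.2.2.2 rfl)
              · simp [hd0 ω hω2 hω]
          · intro ψ hψ
            rcases eq_or_ne ψ θ with rfl | hψ2
            · refine Finset.sum_eq_zero fun ω _ => ?_
              exact if_neg (by rintro ⟨-, -, h3, -⟩; exact h3 rfl)
            · refine Finset.sum_eq_zero fun ω _ => ?_
              simp [hc0 ψ hψ2 hψ]
        · intro χ hχ
          rcases eq_or_ne χ θ⁻¹ with rfl | hχ2
          · refine Finset.sum_eq_zero fun ψ _ => Finset.sum_eq_zero fun ω _ => ?_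
            exact if_neg (by rintro ⟨-, h2, -, -⟩; exact h2 (inv_inv θ).symm)
          · refine Finset.sum_eq_zero fun ψ _ => Finset.sum_eq_zero fun ω _ => ?_
            simp [hd0 χ hχ hχ2]
      · -- φ = θ⁻¹ branch
        rw [sum_single' θ⁻¹]
        · rw [sum_single' θ]
          · rw [sum_single' θ]
            · rw [if_pos ⟨hsq.symm, by rw [inv_inv]; exact hba, hba, hba⟩,
                hcθ, hdθ, hcθ', hdθ']
            · intro ω hω
              rcases eq_or_ne ω θ⁻¹ with rfl | hω2
              · exact if_neg (fun h => h.2.2.2 rfl)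
              · simp [hd0 ω hω hω2]
          · intro ψ hψ
            rcases eq_or_ne ψ θ⁻¹ with rfl | hψ2
            · refine Finset.sum_eq_zero fun ω _ => ?_
              exact if_neg (by rintro ⟨-, -, h3, -⟩; exact h3 rfl)
            · refine Finset.sum_eq_zero fun ω _ => ?_
              simp [hc0 ψ hψ hψ2]
        · intro χ hχ
          rcases eq_or_ne χ θ with rfl | hχ2
          · refine Finset.sum_eq_zero fun ψ _ => Finset.sum_eq_zero fun ω _ => ?_
            exact if_neg (by rintro ⟨-, h2, -, -⟩; exact h2 rfl)
          · refine Finset.sum_eq_zero fun ψ _ => Finset.sum_eq_zero fun ω _ => ?_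
            simp [hd0 χ hχ2 hχ]
    · intro x hx hx'
      refine Finset.sum_eq_zero fun χ _ => Finset.sum_eq_zero fun ψ _ =>
        Finset.sum_eq_zero fun ω _ => ?_
      simp [hc0 x hx hx']
  have h2 : (∑ φ : MChar p, ‖(c φ * d φ)‖ ^ 2 : ℝ)
      = ‖(a1 * b1)‖ ^ 2 + ‖(a2 * b2)‖ ^ 2 := by
    rw [sum_pair' hab]
    · rw [hcθ, hdθ, hcθ', hdθ']
    · intro x hx hx'; simp [hc0 x hx hx']
  have h3 : (∑ φ : MChar p, ‖(c φ * d φ⁻¹)‖ ^ 2 : ℝ)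
      = ‖(a1 * b2)‖ ^ 2 + ‖(a2 * b1)‖ ^ 2 := by
    rw [sum_pair' hab]
    · rw [inv_inv, hcθ, hcθ', hdθ, hdθ']
    · intro x hx hx'; simp [hc0 x hx hx']
  have h4 : (∑ φ : MChar p, c φ * (starRingEnd ℂ) (c φ⁻¹) * d φ⁻¹ * (starRingEnd ℂ) (d φ))
      = a1 * (starRingEnd ℂ) a2 * b2 * (starRingEnd ℂ) b1
        + a2 * (starRingEnd ℂ) a1 * b1 * (starRingEnd ℂ) b2 := by
    rw [sum_pair' hab]
    · rw [inv_inv, hcθ, hcθ', hdθ, hdθ']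
    · intro x hx hx'; simp [hc0 x hx hx']
  have h5 : c (quadChar p) = 0 := hc0 _ hq1 hq2
  rw [h1, h2, h3, h4, h5, zero_mul, norm_zero]
  push_cast
  ring

lemma Sparam_mixed (θ : MChar p) (hth2 : θ ^ 2 ≠ θ) (hth2' : θ ^ 2 ≠ θ⁻¹)
    (hinv2 : (θ ^ 2)⁻¹ = θ ^ 2) (hquad : quadChar p = θ ^ 2) (a1 a2 : ℂ) :
    Sparam p (fun χ => if χ = θ then a1 else if χ = θ⁻¹ then a2 else 0)
             (fun χ => if χ = θ ^ 2 then 1 else 0) = 0 := by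
  set c : MChar p → ℂ := fun χ => if χ = θ then a1 else if χ = θ⁻¹ then a2 else 0 with hc
  set d : MChar p → ℂ := fun χ => if χ = θ ^ 2 then 1 else 0 with hd
  have hc0 : ∀ x, x ≠ θ → x ≠ θ⁻¹ → c x = 0 := by intro x h1 h2; simp [hc, h1, h2]
  have hcq : c (θ ^ 2) = 0 := hc0 _ hth2 hth2'
  have hd0 : ∀ x, x ≠ θ ^ 2 → d x = 0 := by intro x h1; simp [hd, h1]
  rw [Sparam]
  have h1 : (∑ φ : MChar p, ∑ χ : MChar p, ∑ ψ : MChar p, ∑ ω : MChar p,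
      if φ * χ = ψ * ω ∧ φ ≠ χ⁻¹ ∧ φ ≠ ψ ∧ φ ≠ ω then
        c φ * d χ * (starRingEnd ℂ) (c ψ * d ω) *
          (gauss p φ * gauss p χ * (starRingEnd ℂ) (gauss p ψ * gauss p ω)) / (p : ℂ) ^ 2
      else 0) = 0 := by
    refine Finset.sum_eq_zero fun φ _ => Finset.sum_eq_zero fun χ _ =>
      Finset.sum_eq_zero fun ψ _ => Finset.sum_eq_zero fun ω _ => ?_
    rcases eq_or_ne χ (θ ^ 2) with rfl | hχ
    · rcases eq_or_ne ω (θ ^ 2) with rfl | hω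
      · refine if_neg ?_
        rintro ⟨h1e, -, h3, -⟩
        exact h3 (mul_right_cancel h1e)
      · simp [hd0 ω hω]
    · simp [hd0 χ hχ]
  have h2 : (∑ φ : MChar p, ‖(c φ * d φ)‖ ^ 2 : ℝ) = 0 := by
    refine Finset.sum_eq_zero fun φ _ => ?_
    rcases eq_or_ne φ (θ ^ 2) with rfl | hφ
    · simp [hcq]
    · simp [hd0 φ hφ]
  have h3 : (∑ φ : MChar p, ‖(c φ * d φ⁻¹)‖ ^ 2 : ℝ) = 0 := by
    refine Finset.sum_eq_zero fun φ _ => ?_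
    rcases eq_or_ne φ⁻¹ (θ ^ 2) with hφ | hφ
    · have : φ = θ ^ 2 := by rw [← inv_inv φ, hφ, hinv2]
      simp [this, hcq]
    · simp [hd0 _ hφ]
  have h4 : (∑ φ : MChar p, c φ * (starRingEnd ℂ) (c φ⁻¹) * d φ⁻¹
      * (starRingEnd ℂ) (d φ)) = 0 := by
    refine Finset.sum_eq_zero fun φ _ => ?_
    rcases eq_or_ne φ⁻¹ (θ ^ 2) with hφ | hφ
    · have : φ = θ ^ 2 := by rw [← inv_inv φ, hφ, hinv2]
      simp [this, hcq]
    · simp [hd0 _ hφ]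
  rw [h1, h2, h3, h4, hquad, hcq, zero_mul, norm_zero]
  push_cast
  ring

lemma Sparam_h (θ : MChar p) (hinv2 : (θ ^ 2)⁻¹ = θ ^ 2) (hquad : quadChar p = θ ^ 2) :
    Sparam p (fun χ => if χ = θ ^ 2 then 1 else 0)
             (fun χ => if χ = θ ^ 2 then 1 else 0) = -2 := by
  set d : MChar p → ℂ := fun χ => if χ = θ ^ 2 then 1 else 0 with hd
  have hd0 : ∀ x, x ≠ θ ^ 2 → d x = 0 := by intro x h1; simp [hd, h1]
  have hd1 : d (θ ^ 2) = 1 := by simp [hd]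
  rw [Sparam]
  have h1 : (∑ φ : MChar p, ∑ χ : MChar p, ∑ ψ : MChar p, ∑ ω : MChar p,
      if φ * χ = ψ * ω ∧ φ ≠ χ⁻¹ ∧ φ ≠ ψ ∧ φ ≠ ω then
        d φ * d χ * (starRingEnd ℂ) (d ψ * d ω) *
          (gauss p φ * gauss p χ * (starRingEnd ℂ) (gauss p ψ * gauss p ω)) / (p : ℂ) ^ 2
      else 0) = 0 := by
    refine Finset.sum_eq_zero fun φ _ => Finset.sum_eq_zero fun χ _ =>
      Finset.sum_eq_zero fun ψ _ => Finset.sum_eq_zero fun ω _ => ?_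
    rcases eq_or_ne φ (θ ^ 2) with rfl | hφ
    · rcases eq_or_ne χ (θ ^ 2) with rfl | hχ
      · refine if_neg ?_
        rintro ⟨-, h2, -, -⟩
        exact h2 hinv2.symm
      · simp [hd0 χ hχ]
    · simp [hd0 φ hφ]
  have h2 : (∑ φ : MChar p, ‖(d φ * d φ)‖ ^ 2 : ℝ) = 1 := by
    rw [sum_single' (θ ^ 2)]
    · simp [hd1]
    · intro x hx; simp [hd0 x hx]
  have h3 : (∑ φ : MChar p, ‖(d φ * d φ⁻¹)‖ ^ 2 : ℝ) = 1 := by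
    rw [sum_single' (θ ^ 2)]
    · rw [hinv2, hd1]; simp
    · intro x hx; simp [hd0 x hx]
  have h4 : (∑ φ : MChar p, d φ * (starRingEnd ℂ) (d φ⁻¹) * d φ⁻¹
      * (starRingEnd ℂ) (d φ)) = 1 := by
    rw [sum_single' (θ ^ 2)]
    · rw [hinv2, hd1]; simp
    · intro x hx; simp [hd0 x hx]
  rw [h1, h2, h3, h4, hquad, hd1, one_mul, norm_one]
  push_cast
  ring

end AuxChar

/-- The parameter values for the quartic-character combinations `f`, `g` and the
quadratic-character combination `h` over `F_p` with `p ≡ 1 (mod 4)`, where `θ` is the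
quartic character with `θ(α) = i` for a primitive element `α`. -/

theorem quartic_parameter_values
    (p : ℕ) [Fact p.Prime] (hp4 : p % 4 = 1)
    (α : (ZMod p)ˣ) (hα : IsPrimitive p α)
    (θ : MChar p) (hθ : θ ((α : (ZMod p)ˣ) : ZMod p) = Complex.I)
    (cf cg ch : MChar p → ℂ)
    (hcf : cf = fun χ =>
      if χ = θ then (1 - Complex.I) / 2 else if χ = θ⁻¹ then (1 + Complex.I) / 2 else 0)
    (hcg : cg = fun χ =>
      if χ = θ then (1 + Complex.I) / 2 else if χ = θ⁻¹ then (1 - Complex.I) / 2 else 0)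
    (hch : ch = fun χ => if χ = θ ^ 2 then 1 else 0) :
    Sparam p cf cf = (((-3 - (gauss p θ ^ 4 / (p : ℂ) ^ 2).re) / 2 : ℝ) : ℂ) ∧
    Sparam p cg cg = (((-3 - (gauss p θ ^ 4 / (p : ℂ) ^ 2).re) / 2 : ℝ) : ℂ) ∧
    Sparam p ch ch = -2 ∧
    Sparam p cf cg = (((-1 + (gauss p θ ^ 4 / (p : ℂ) ^ 2).re) / 2 : ℝ) : ℂ) ∧
    Sparam p cf ch = 0 ∧
    Sparam p cg ch = 0 ∧
    Uparam p cf cf = 1 ∧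
    Uparam p cg cg = 1 ∧
    Uparam p ch ch = 1 ∧
    Vparam p cf cf = 1 ∧
    Vparam p cg cg = 1 ∧
    Vparam p ch ch = 1 ∧
    Uparam p cf cg = 0 ∧
    Vparam p cf cg = 0 ∧
    Uparam p cf ch = 0 ∧
    Uparam p cg ch = 0 ∧
    Vparam p cf ch = 0 ∧
    Vparam p cg ch = 0 ∧
    Wparam p cf = Real.sqrt 2 ∧
    Wparam p cg = Real.sqrt 2 ∧
    Wparam p ch = 1 := by
  subst hcf hcg hch
  have hαmem : ∀ x : (ZMod p)ˣ, x ∈ Subgroup.zpowers α := hα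
  -- order of α and non-squareness
  have hord : orderOf α = p - 1 := by
    have h := orderOf_eq_card_of_forall_mem_zpowers hαmem
    rwa [Nat.card_eq_fintype_card, ZMod.card_units] at h
  have hnsq : ¬ IsSquare ((α : (ZMod p)ˣ) : ZMod p) := by
    rintro ⟨r, hr⟩
    have hrunit : IsUnit r := by
      have h1 : IsUnit (r * r) := by rw [← hr]; exact α.isUnit
      exact isUnit_of_mul_isUnit_left h1
    obtain ⟨k, hk⟩ := Subgroup.mem_zpowers_iff.mp (hαmem hrunit.unit)
    have hα2 : α = hrunit.unit * hrunit.unit :=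
      Units.ext (by rw [Units.val_mul, hrunit.unit_spec]; exact hr)
    have h2k : α ^ (k + k) = α := by rw [zpow_add, hk, ← hα2]
    have hzp : α ^ (k + k - 1) = 1 := by rw [zpow_sub, h2k, zpow_one]; exact mul_inv_cancel α
    have hdvd : ((p - 1 : ℕ) : ℤ) ∣ k + k - 1 := by
      rw [← hord]; exact orderOf_dvd_iff_zpow_eq_one.mpr hzp
    have hple : 2 ≤ p := (Fact.out : p.Prime).two_le
    have h2 : (2 : ℤ) ∣ ((p - 1 : ℕ) : ℤ) := by
      have h2' : (2 : ℕ) ∣ p - 1 := by omega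
      exact_mod_cast Int.natCast_dvd_natCast.mpr h2'
    obtain ⟨t, ht⟩ := h2.trans hdvd
    omega
  -- basic character facts
  have hθα2 : (θ ^ 2) ((α : (ZMod p)ˣ) : ZMod p) = -1 := by
    rw [MulChar.pow_apply_coe, hθ, Complex.I_sq]
  have hθ4 : θ ^ 4 = 1 := by
    refine char_eq_of_gen hαmem _ _ ?_
    rw [MulChar.pow_apply_coe, hθ, MulChar.one_apply_coe]
    rw [show (4 : ℕ) = 2 * 2 from rfl, pow_mul, Complex.I_sq]
    norm_num
  have hquad : quadChar p = θ ^ 2 := by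
    refine char_eq_of_gen hαmem _ _ ?_
    rw [hθα2, quadChar, MulChar.ringHomComp_apply,
      quadraticChar_neg_one_iff_not_isSquare.mpr hnsq]
    simp
  have hvalinv : θ⁻¹ ((α : (ZMod p)ˣ) : ZMod p) = -Complex.I := by
    rw [MulChar.inv_apply_eq_inv', hθ, Complex.inv_I]
  have hab : θ ≠ θ⁻¹ := by
    intro h
    have h2 := congrArg (fun χ : MChar p => χ ((α : (ZMod p)ˣ) : ZMod p)) h
    rw [hθ, hvalinv] at h2
    have := congrArg Complex.im h2
    norm_num at this
  have hba : θ⁻¹ ≠ θ := fun h => hab h.symm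
  have hth2 : θ ^ 2 ≠ θ := by
    intro h
    have h2 := congrArg (fun χ : MChar p => χ ((α : (ZMod p)ˣ) : ZMod p)) h
    rw [hθα2, hθ] at h2
    have := congrArg Complex.im h2
    norm_num at this
  have hth2' : θ ^ 2 ≠ θ⁻¹ := by
    intro h
    have h2 := congrArg (fun χ : MChar p => χ ((α : (ZMod p)ˣ) : ZMod p)) h
    rw [hθα2, hvalinv] at h2
    have := congrArg Complex.im h2
    norm_num at this
  have hA : θ ≠ θ ^ 2 := fun e => hth2 e.symm
  have hB : θ⁻¹ ≠ θ ^ 2 := fun e => hth2' e.symm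
  have hq1 : quadChar p ≠ θ := by rw [hquad]; exact hth2
  have hq2 : quadChar p ≠ θ⁻¹ := by rw [hquad]; exact hth2'
  have hinv2 : (θ ^ 2)⁻¹ = θ ^ 2 := inv_eq_of_mul_eq_one_right (by rw [← pow_add]; exact hθ4)
  have hsq : θ * θ = θ⁻¹ * θ⁻¹ := by
    have h1 : (θ * θ)⁻¹ = θ * θ := by rw [← pow_two]; exact hinv2
    rw [← h1, mul_inv_rev]
  have hε : θ (-1 : ZMod p) * θ (-1 : ZMod p) = 1 := by
    rw [← map_mul, neg_mul_neg, one_mul, map_one]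
  have hεinv : θ⁻¹ (-1 : ZMod p) = θ (-1 : ZMod p) := by
    rw [MulChar.inv_apply_eq_inv']; exact inv_eq_of_mul_eq_one_right hε
  have hq2ε : (θ ^ 2) (-1 : ZMod p) = 1 := by
    rw [MulChar.pow_apply' θ two_ne_zero, sq]; exact hε
  -- Gauss sum conjugation
  have hg1 : (starRingEnd ℂ) (gauss p θ) = θ (-1 : ZMod p) * gauss p θ⁻¹ := by
    rw [conj_gauss, hεinv]
  have hg2 : (starRingEnd ℂ) (gauss p θ⁻¹) = θ (-1 : ZMod p) * gauss p θ := by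
    rw [conj_gauss, inv_inv]
  have hzc : (starRingEnd ℂ) (gauss p θ ^ 4 / (p : ℂ) ^ 2)
      = (θ (-1 : ZMod p) * gauss p θ⁻¹) ^ 4 / (p : ℂ) ^ 2 := by
    rw [map_div₀, map_pow, hg1, map_pow, map_natCast]
  have hre : gauss p θ ^ 4 / (p : ℂ) ^ 2 + (θ (-1 : ZMod p) * gauss p θ⁻¹) ^ 4 / (p : ℂ) ^ 2
      = 2 * (((gauss p θ ^ 4 / (p : ℂ) ^ 2).re : ℝ) : ℂ) := by
    rw [← hzc, Complex.add_conj]; push_cast; ring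
  -- the coefficient functions
  set F : MChar p → ℂ := fun χ =>
    if χ = θ then (1 - Complex.I) / 2 else if χ = θ⁻¹ then (1 + Complex.I) / 2 else 0 with hF
  set G : MChar p → ℂ := fun χ =>
    if χ = θ then (1 + Complex.I) / 2 else if χ = θ⁻¹ then (1 - Complex.I) / 2 else 0 with hG
  set H : MChar p → ℂ := fun χ => if χ = θ ^ 2 then 1 else 0 with hH
  have hFθ : F θ = (1 - Complex.I) / 2 := by rw [hF]; simp
  have hFθ' : F θ⁻¹ = (1 + Complex.I) / 2 := by rw [hF]; simp [hba]
  have hF0 : ∀ x, x ≠ θ → x ≠ θ⁻¹ → F x = 0 := by intro x h1 h2; rw [hF]; simp [h1, h2]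
  have hGθ : G θ = (1 + Complex.I) / 2 := by rw [hG]; simp
  have hGθ' : G θ⁻¹ = (1 - Complex.I) / 2 := by rw [hG]; simp [hba]
  have hG0 : ∀ x, x ≠ θ → x ≠ θ⁻¹ → G x = 0 := by intro x h1 h2; rw [hG]; simp [h1, h2]
  have hHq : H (θ ^ 2) = 1 := by rw [hH]; simp
  have hH0 : ∀ x, x ≠ θ ^ 2 → H x = 0 := by intro x h1; rw [hH]; simp [h1]
  -- modulus facts
  have habs1 : ‖((1 - Complex.I) / 2)‖ = Real.sqrt 2 / 2 := by
    rw [Complex.norm_def]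
    norm_num [Complex.normSq_apply]
    have h : Real.sqrt 2 ≠ 0 := by positivity
    field_simp
    exact (Real.sq_sqrt (by norm_num)).symm
  have habs2 : ‖((1 + Complex.I) / 2)‖ = Real.sqrt 2 / 2 := by
    rw [Complex.norm_def]
    norm_num [Complex.normSq_apply]
    have h : Real.sqrt 2 ≠ 0 := by positivity
    field_simp
    exact (Real.sq_sqrt (by norm_num)).symm
  refine ⟨?_, ?_, ?_, ?_, ?_, ?_, ?_, ?_, ?_, ?_, ?_, ?_, ?_, ?_, ?_, ?_, ?_, ?_, ?_, ?_, ?_⟩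
  · -- S f f
    rw [hF, Sparam_pair θ hab hsq hq1 hq2]
    have k1 : (1 - Complex.I) / 2 * ((1 - Complex.I) / 2) *
        (starRingEnd ℂ) ((1 + Complex.I) / 2 * ((1 + Complex.I) / 2)) = -(1/4) := by
      simp only [map_mul, map_div₀, map_sub, map_add, map_one, map_ofNat, Complex.conj_I]
      norm_num [Complex.ext_iff]
    have k2 : (1 + Complex.I) / 2 * ((1 + Complex.I) / 2) *
        (starRingEnd ℂ) ((1 - Complex.I) / 2 * ((1 - Complex.I) / 2)) = -(1/4) := by
      simp only [map_mul, map_div₀, map_sub, map_add, map_one, map_ofNat, Complex.conj_I]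
      norm_num [Complex.ext_iff]
    have k3 : ‖((1 - Complex.I) / 2 * ((1 - Complex.I) / 2))‖ ^ 2 = 1/4 := by
      rw [Complex.sq_norm]; norm_num [Complex.normSq_apply, Complex.ext_iff]
    have k4 : ‖((1 + Complex.I) / 2 * ((1 + Complex.I) / 2))‖ ^ 2 = 1/4 := by
      rw [Complex.sq_norm]; norm_num [Complex.normSq_apply, Complex.ext_iff]
    have k5 : ‖((1 - Complex.I) / 2 * ((1 + Complex.I) / 2))‖ ^ 2 = 1/4 := by
      rw [Complex.sq_norm]; norm_num [Complex.normSq_apply, Complex.ext_iff]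
    have k6 : ‖((1 + Complex.I) / 2 * ((1 - Complex.I) / 2))‖ ^ 2 = 1/4 := by
      rw [Complex.sq_norm]; norm_num [Complex.normSq_apply, Complex.ext_iff]
    have k7 : (1 - Complex.I) / 2 * (starRingEnd ℂ) ((1 + Complex.I) / 2) *
        ((1 + Complex.I) / 2) * (starRingEnd ℂ) ((1 - Complex.I) / 2) = 1/4 := by
      simp only [map_mul, map_div₀, map_sub, map_add, map_one, map_ofNat, Complex.conj_I]
      norm_num [Complex.ext_iff]
    have k8 : (1 + Complex.I) / 2 * (starRingEnd ℂ) ((1 - Complex.I) / 2) *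
        ((1 - Complex.I) / 2) * (starRingEnd ℂ) ((1 + Complex.I) / 2) = 1/4 := by
      simp only [map_mul, map_div₀, map_sub, map_add, map_one, map_ofNat, Complex.conj_I]
      norm_num [Complex.ext_iff]
    rw [k1, k2, k3, k4, k5, k6, k7, k8]
    simp only [map_mul, hg1, hg2]
    push_cast
    linear_combination (-(θ (-1 : ZMod p) ^ 2)/4) * hre +
      (θ (-1 : ZMod p) ^ 2 * gauss p θ⁻¹ ^ 4 * (θ (-1 : ZMod p) ^ 2 + 1) / (4 * (p : ℂ) ^ 2)
        - (((gauss p θ ^ 4 / (p : ℂ) ^ 2).re : ℝ) : ℂ) / 2) * hε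
  · -- S g g
    rw [hG, Sparam_pair θ hab hsq hq1 hq2]
    have k1 : (1 + Complex.I) / 2 * ((1 + Complex.I) / 2) *
        (starRingEnd ℂ) ((1 - Complex.I) / 2 * ((1 - Complex.I) / 2)) = -(1/4) := by
      simp only [map_mul, map_div₀, map_sub, map_add, map_one, map_ofNat, Complex.conj_I]
      norm_num [Complex.ext_iff]
    have k2 : (1 - Complex.I) / 2 * ((1 - Complex.I) / 2) *
        (starRingEnd ℂ) ((1 + Complex.I) / 2 * ((1 + Complex.I) / 2)) = -(1/4) := by
      simp only [map_mul, map_div₀, map_sub, map_add, map_one, map_ofNat, Complex.conj_I]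
      norm_num [Complex.ext_iff]
    have k3 : ‖((1 + Complex.I) / 2 * ((1 + Complex.I) / 2))‖ ^ 2 = 1/4 := by
      rw [Complex.sq_norm]; norm_num [Complex.normSq_apply, Complex.ext_iff]
    have k4 : ‖((1 - Complex.I) / 2 * ((1 - Complex.I) / 2))‖ ^ 2 = 1/4 := by
      rw [Complex.sq_norm]; norm_num [Complex.normSq_apply, Complex.ext_iff]
    have k5 : ‖((1 + Complex.I) / 2 * ((1 - Complex.I) / 2))‖ ^ 2 = 1/4 := by
      rw [Complex.sq_norm]; norm_num [Complex.normSq_apply, Complex.ext_iff]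
    have k6 : ‖((1 - Complex.I) / 2 * ((1 + Complex.I) / 2))‖ ^ 2 = 1/4 := by
      rw [Complex.sq_norm]; norm_num [Complex.normSq_apply, Complex.ext_iff]
    have k7 : (1 + Complex.I) / 2 * (starRingEnd ℂ) ((1 - Complex.I) / 2) *
        ((1 - Complex.I) / 2) * (starRingEnd ℂ) ((1 + Complex.I) / 2) = 1/4 := by
      simp only [map_mul, map_div₀, map_sub, map_add, map_one, map_ofNat, Complex.conj_I]
      norm_num [Complex.ext_iff]
    have k8 : (1 - Complex.I) / 2 * (starRingEnd ℂ) ((1 + Complex.I) / 2) *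
        ((1 + Complex.I) / 2) * (starRingEnd ℂ) ((1 - Complex.I) / 2) = 1/4 := by
      simp only [map_mul, map_div₀, map_sub, map_add, map_one, map_ofNat, Complex.conj_I]
      norm_num [Complex.ext_iff]
    rw [k1, k2, k3, k4, k5, k6, k7, k8]
    simp only [map_mul, hg1, hg2]
    push_cast
    linear_combination (-(θ (-1 : ZMod p) ^ 2)/4) * hre +
      (θ (-1 : ZMod p) ^ 2 * gauss p θ⁻¹ ^ 4 * (θ (-1 : ZMod p) ^ 2 + 1) / (4 * (p : ℂ) ^ 2)
        - (((gauss p θ ^ 4 / (p : ℂ) ^ 2).re : ℝ) : ℂ) / 2) * hε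
  · -- S h h
    rw [hH]; exact Sparam_h θ hinv2 hquad
  · -- S f g
    rw [hF, hG, Sparam_pair θ hab hsq hq1 hq2]
    have k1 : (1 - Complex.I) / 2 * ((1 + Complex.I) / 2) *
        (starRingEnd ℂ) ((1 + Complex.I) / 2 * ((1 - Complex.I) / 2)) = 1/4 := by
      simp only [map_mul, map_div₀, map_sub, map_add, map_one, map_ofNat, Complex.conj_I]
      norm_num [Complex.ext_iff]
    have k2 : (1 + Complex.I) / 2 * ((1 - Complex.I) / 2) *
        (starRingEnd ℂ) ((1 - Complex.I) / 2 * ((1 + Complex.I) / 2)) = 1/4 := by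
      simp only [map_mul, map_div₀, map_sub, map_add, map_one, map_ofNat, Complex.conj_I]
      norm_num [Complex.ext_iff]
    have k3 : ‖((1 - Complex.I) / 2 * ((1 + Complex.I) / 2))‖ ^ 2 = 1/4 := by
      rw [Complex.sq_norm]; norm_num [Complex.normSq_apply, Complex.ext_iff]
    have k4 : ‖((1 + Complex.I) / 2 * ((1 - Complex.I) / 2))‖ ^ 2 = 1/4 := by
      rw [Complex.sq_norm]; norm_num [Complex.normSq_apply, Complex.ext_iff]
    have k5 : ‖((1 - Complex.I) / 2 * ((1 - Complex.I) / 2))‖ ^ 2 = 1/4 := by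
      rw [Complex.sq_norm]; norm_num [Complex.normSq_apply, Complex.ext_iff]
    have k6 : ‖((1 + Complex.I) / 2 * ((1 + Complex.I) / 2))‖ ^ 2 = 1/4 := by
      rw [Complex.sq_norm]; norm_num [Complex.normSq_apply, Complex.ext_iff]
    have k7 : (1 - Complex.I) / 2 * (starRingEnd ℂ) ((1 + Complex.I) / 2) *
        ((1 - Complex.I) / 2) * (starRingEnd ℂ) ((1 + Complex.I) / 2) = -(1/4) := by
      simp only [map_mul, map_div₀, map_sub, map_add, map_one, map_ofNat, Complex.conj_I]
      norm_num [Complex.ext_iff]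
    have k8 : (1 + Complex.I) / 2 * (starRingEnd ℂ) ((1 - Complex.I) / 2) *
        ((1 + Complex.I) / 2) * (starRingEnd ℂ) ((1 - Complex.I) / 2) = -(1/4) := by
      simp only [map_mul, map_div₀, map_sub, map_add, map_one, map_ofNat, Complex.conj_I]
      norm_num [Complex.ext_iff]
    rw [k1, k2, k3, k4, k5, k6, k7, k8]
    simp only [map_mul, hg1, hg2]
    push_cast
    linear_combination (θ (-1 : ZMod p) ^ 2/4) * hre +
      (-(θ (-1 : ZMod p) ^ 2 * gauss p θ⁻¹ ^ 4 * (θ (-1 : ZMod p) ^ 2 + 1) / (4 * (p : ℂ) ^ 2))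
        + (((gauss p θ ^ 4 / (p : ℂ) ^ 2).re : ℝ) : ℂ) / 2) * hε
  · -- S f h
    rw [hF, hH]; exact Sparam_mixed θ hth2 hth2' hinv2 hquad _ _
  · -- S g h
    rw [hG, hH]; exact Sparam_mixed θ hth2 hth2' hinv2 hquad _ _
  · -- U f f
    rw [Uparam, sum_pair' hab]
    · rw [hFθ, hFθ']
      have e : (1 - Complex.I) / 2 * (starRingEnd ℂ) ((1 - Complex.I) / 2)
          + (1 + Complex.I) / 2 * (starRingEnd ℂ) ((1 + Complex.I) / 2) = 1 := by
        simp only [map_mul, map_div₀, map_sub, map_add, map_one, map_ofNat, Complex.conj_I]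
        norm_num [Complex.ext_iff]
      rw [e]; simp
    · intro x hx hx'; rw [hF0 x hx hx']; simp
  · -- U g g
    rw [Uparam, sum_pair' hab]
    · rw [hGθ, hGθ']
      have e : (1 + Complex.I) / 2 * (starRingEnd ℂ) ((1 + Complex.I) / 2)
          + (1 - Complex.I) / 2 * (starRingEnd ℂ) ((1 - Complex.I) / 2) = 1 := by
        simp only [map_mul, map_div₀, map_sub, map_add, map_one, map_ofNat, Complex.conj_I]
        norm_num [Complex.ext_iff]
      rw [e]; simp
    · intro x hx hx'; rw [hG0 x hx hx']; simp
  · -- U h h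
    rw [Uparam, sum_single' (θ ^ 2)]
    · rw [hHq]; simp
    · intro x hx; rw [hH0 x hx]; simp
  · -- V f f
    rw [Vparam, sum_pair' hab]
    · rw [inv_inv, hεinv, hFθ, hFθ']
      have e : (1 - Complex.I) / 2 * ((1 + Complex.I) / 2) * θ (-1 : ZMod p)
          + (1 + Complex.I) / 2 * ((1 - Complex.I) / 2) * θ (-1 : ZMod p)
          = θ (-1 : ZMod p) := by
        linear_combination (-(θ (-1 : ZMod p))/2) * Complex.I_sq
      rw [e]
      rcases mul_self_eq_one_iff.mp hε with h1 | h1 <;> rw [h1] <;> simp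
    · intro x hx hx'; rw [hF0 x hx hx']; simp
  · -- V g g
    rw [Vparam, sum_pair' hab]
    · rw [inv_inv, hεinv, hGθ, hGθ']
      have e : (1 + Complex.I) / 2 * ((1 - Complex.I) / 2) * θ (-1 : ZMod p)
          + (1 - Complex.I) / 2 * ((1 + Complex.I) / 2) * θ (-1 : ZMod p)
          = θ (-1 : ZMod p) := by
        linear_combination (-(θ (-1 : ZMod p))/2) * Complex.I_sq
      rw [e]
      rcases mul_self_eq_one_iff.mp hε with h1 | h1 <;> rw [h1] <;> simp
    · intro x hx hx'; rw [hG0 x hx hx']; simp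
  · -- V h h
    rw [Vparam, sum_single' (θ ^ 2)]
    · rw [hinv2, hHq, hq2ε]; simp
    · intro x hx; rw [hH0 x hx]; simp
  · -- U f g
    rw [Uparam, sum_pair' hab]
    · rw [hFθ, hFθ', hGθ, hGθ']
      have e : (1 - Complex.I) / 2 * (starRingEnd ℂ) ((1 + Complex.I) / 2)
          + (1 + Complex.I) / 2 * (starRingEnd ℂ) ((1 - Complex.I) / 2) = 0 := by
        simp only [map_mul, map_div₀, map_sub, map_add, map_one, map_ofNat, Complex.conj_I]
        norm_num [Complex.ext_iff]
      rw [e]; simp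
    · intro x hx hx'; rw [hF0 x hx hx']; simp
  · -- V f g
    rw [Vparam, sum_pair' hab]
    · rw [inv_inv, hεinv, hFθ, hFθ', hGθ, hGθ']
      have e : (1 - Complex.I) / 2 * ((1 - Complex.I) / 2) * θ (-1 : ZMod p)
          + (1 + Complex.I) / 2 * ((1 + Complex.I) / 2) * θ (-1 : ZMod p) = 0 := by
        linear_combination (θ (-1 : ZMod p)/2) * Complex.I_sq
      rw [e]; simp
    · intro x hx hx'; rw [hF0 x hx hx']; simp
  · -- U f h
    rw [Uparam, Finset.sum_eq_zero]
    · simp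
    · intro φ _
      rcases eq_or_ne φ θ with h1 | h1
      · rw [h1, hH0 θ hA]; simp
      · rcases eq_or_ne φ θ⁻¹ with h2 | h2
        · rw [h2, hH0 θ⁻¹ hB]; simp
        · rw [hF0 φ h1 h2]; simp
  · -- U g h
    rw [Uparam, Finset.sum_eq_zero]
    · simp
    · intro φ _
      rcases eq_or_ne φ θ with h1 | h1
      · rw [h1, hH0 θ hA]; simp
      · rcases eq_or_ne φ θ⁻¹ with h2 | h2
        · rw [h2, hH0 θ⁻¹ hB]; simp
        · rw [hG0 φ h1 h2]; simp
  · -- V f h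
    rw [Vparam, Finset.sum_eq_zero]
    · simp
    · intro φ _
      rcases eq_or_ne φ⁻¹ (θ ^ 2) with h1 | h1
      · have hφ : φ = θ ^ 2 := by rw [← inv_inv φ, h1, hinv2]
        rw [hφ, hF0 (θ ^ 2) hth2 hth2']; simp
      · rw [hH0 _ h1]; simp
  · -- V g h
    rw [Vparam, Finset.sum_eq_zero]
    · simp
    · intro φ _
      rcases eq_or_ne φ⁻¹ (θ ^ 2) with h1 | h1
      · have hφ : φ = θ ^ 2 := by rw [← inv_inv φ, h1, hinv2]
        rw [hφ, hG0 (θ ^ 2) hth2 hth2']; simp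
      · rw [hH0 _ h1]; simp
  · -- W f
    rw [Wparam, sum_pair' hab]
    · rw [hFθ, hFθ', habs1, habs2]; ring
    · intro x hx hx'; rw [hF0 x hx hx']; simp
  · -- W g
    rw [Wparam, sum_pair' hab]
    · rw [hGθ, hGθ', habs1, habs2]; ring
    · intro x hx hx'; rw [hG0 x hx hx']; simp
  · -- W h
    rw [Wparam, sum_single' (θ ^ 2)]
    · rw [hHq]; simp
    · intro x hx; rw [hH0 x hx]; simp

end Paper
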